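/- arXiv:0806.0955 — 2 statements merged into one kernel-verified Lean document; each statement's English description precedes it below -/
import Mathlib

section
/- Let F : ℝ → ℝ be continuous with F(0) = 0, satisfying: for each c > 0 there exist 0 < r₁ < r₂ with F⁺(s) ≤ c|s|^{p*} for |s| ≤ r₁ or |s| ≥ r₂. Let (u_h) be a sequence bounded in L^{p*}(ℝⁿ) with F(u_h) ∈ L¹(ℝⁿ) and ∫ F(u_h) = 1 for all h, and suppose u_h → u a.e. Then F⁺(u) ∈ L¹(ℝⁿ) and F⁻(u) ∈ L¹(ℝⁿ), hence F(u) ∈ L¹(ℝⁿ). -/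
open MeasureTheory
open scoped ENNReal

private lemma max_neg_eq (a : ℝ) : max (-a) 0 = max a 0 - a := by
  rw [← max_sub_sub_right a 0 a, sub_self, zero_sub, max_comm]

private lemma key_bound {α : Type*} [MeasurableSpace α] {μ : Measure α}
    {q r₁ β : ℝ} (hq : 0 < q) (hr₁ : 0 < r₁) (hβ : 0 ≤ β)
    {G : ℝ → ℝ}
    (hbd : ∀ s : ℝ, G s ≤ |s| ^ q + Set.indicator {s : ℝ | r₁ ≤ |s|} (fun _ => β) s)
    {v : α → ℝ} (hv : AEMeasurable v μ) :
    ∫⁻ x, ENNReal.ofReal (G (v x)) ∂μ ≤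
      (1 + ENNReal.ofReal β / ENNReal.ofReal r₁ ^ q) * ∫⁻ x, (‖v x‖₊ : ℝ≥0∞) ^ q ∂μ := by
  set I := ∫⁻ x, (‖v x‖₊ : ℝ≥0∞) ^ q ∂μ with hI
  set ε : ℝ≥0∞ := ENNReal.ofReal r₁ ^ q with hε
  have hfmeas : AEMeasurable (fun x => (‖v x‖₊ : ℝ≥0∞) ^ q) μ := hv.enorm.pow_const q
  have hεne : ε ≠ 0 := by
    rw [hε, ENNReal.ofReal_rpow_of_nonneg hr₁.le hq.le]
    simpa using (Real.rpow_pos_of_pos hr₁ q)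
  have hεtop : ε ≠ ∞ := by
    rw [hε, ENNReal.ofReal_rpow_of_nonneg hr₁.le hq.le]; exact ENNReal.ofReal_ne_top
  set S : Set α := {x | r₁ ≤ |v x|} with hS
  have hSnull : NullMeasurableSet S μ := by
    have : S = v ⁻¹' {s : ℝ | r₁ ≤ |s|} := rfl
    rw [this]
    exact hv.nullMeasurable (measurableSet_le measurable_const measurable_norm)
  -- Chebyshev
  have cheb : μ S ≤ I / ε := by
    rw [ENNReal.le_div_iff_mul_le (Or.inl hεne) (Or.inl hεtop)]
    have hsub : S ⊆ {x | ε ≤ (‖v x‖₊ : ℝ≥0∞) ^ q} := by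
      intro x hx
      have h1 : ENNReal.ofReal r₁ ≤ (‖v x‖₊ : ℝ≥0∞) := by
        rw [← enorm_eq_nnnorm, Real.enorm_eq_ofReal_abs]
        exact ENNReal.ofReal_le_ofReal hx
      exact ENNReal.rpow_le_rpow h1 hq.le
    calc μ S * ε = ε * μ S := mul_comm _ _
      _ ≤ ε * μ {x | ε ≤ (‖v x‖₊ : ℝ≥0∞) ^ q} :=
          mul_le_mul_right (measure_mono hsub) ε
      _ ≤ I := mul_meas_ge_le_lintegral₀ hfmeas ε
  -- pointwise bound
  have hpt : ∀ x, ENNReal.ofReal (G (v x)) ≤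
      (‖v x‖₊ : ℝ≥0∞) ^ q + S.indicator (fun _ => ENNReal.ofReal β) x := by
    intro x
    calc ENNReal.ofReal (G (v x))
        ≤ ENNReal.ofReal (|v x| ^ q + Set.indicator {s : ℝ | r₁ ≤ |s|} (fun _ => β) (v x)) :=
          ENNReal.ofReal_le_ofReal (hbd (v x))
      _ ≤ ENNReal.ofReal (|v x| ^ q) +
          ENNReal.ofReal (Set.indicator {s : ℝ | r₁ ≤ |s|} (fun _ => β) (v x)) :=
          ENNReal.ofReal_add_le
      _ ≤ (‖v x‖₊ : ℝ≥0∞) ^ q + S.indicator (fun _ => ENNReal.ofReal β) x := by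
          gcongr
          · rw [← enorm_eq_nnnorm, Real.enorm_eq_ofReal_abs, ENNReal.ofReal_rpow_of_nonneg (abs_nonneg _) hq.le]
          · by_cases hx : x ∈ S
            · rw [Set.indicator_of_mem hx, Set.indicator_of_mem (by exact hx)]
            · rw [Set.indicator_of_notMem hx, Set.indicator_of_notMem (by exact hx)]
              simp
  calc ∫⁻ x, ENNReal.ofReal (G (v x)) ∂μ
      ≤ ∫⁻ x, ((‖v x‖₊ : ℝ≥0∞) ^ q + S.indicator (fun _ => ENNReal.ofReal β) x) ∂μ :=
        lintegral_mono hpt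
    _ = I + ∫⁻ x, S.indicator (fun _ => ENNReal.ofReal β) x ∂μ := lintegral_add_left' hfmeas _
    _ = I + ENNReal.ofReal β * μ S := by rw [lintegral_indicator_const₀ hSnull]
    _ ≤ I + ENNReal.ofReal β * (I / ε) := by gcongr
    _ = (1 + ENNReal.ofReal β / ε) * I := by
        rw [div_eq_mul_inv, div_eq_mul_inv]; ring

theorem stmt_5 {n : ℕ} (hn : 0 < n) (p : ℝ) (hp : 1 < p) (hpn : p < (n : ℝ))
    (F : ℝ → ℝ) (hF : Continuous F) (hF0 : F 0 = 0)
    (hgrowth : ∀ c > (0 : ℝ), ∃ r₁ r₂ : ℝ, 0 < r₁ ∧ r₁ < r₂ ∧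
      ∀ s : ℝ, (|s| ≤ r₁ ∨ r₂ ≤ |s|) →
        max (F s) 0 ≤ c * |s| ^ ((n : ℝ) * p / ((n : ℝ) - p)))
    (uh : ℕ → EuclideanSpace ℝ (Fin n) → ℝ)
    (hm : ∀ h, AEMeasurable (uh h) volume)
    (C : ℝ≥0∞) (hC : C < ⊤)
    (hbdd : ∀ h, eLpNorm (uh h) (ENNReal.ofReal ((n : ℝ) * p / ((n : ℝ) - p))) volume ≤ C)
    (hFL1 : ∀ h, Integrable (fun x => F (uh h x)) volume)
    (hint1 : ∀ h, (∫ x, F (uh h x)) = 1)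
    (u : EuclideanSpace ℝ (Fin n) → ℝ)
    (hae : ∀ᵐ x ∂(volume : Measure (EuclideanSpace ℝ (Fin n))),
      Filter.Tendsto (fun h => uh h x) Filter.atTop (nhds (u x))) :
    Integrable (fun x => max (F (u x)) 0) volume ∧
    Integrable (fun x => max (-(F (u x))) 0) volume ∧
    Integrable (fun x => F (u x)) volume := by
  set q : ℝ := (n : ℝ) * p / ((n : ℝ) - p) with hqdef
  have hp0 : (0 : ℝ) < p := lt_trans one_pos hp
  have hn0 : (0 : ℝ) < n := by exact_mod_cast hn
  have hq : 0 < q := div_pos (mul_pos hn0 hp0) (by linarith)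
  obtain ⟨r₁, r₂, hr₁, hr₁₂, hgr⟩ := hgrowth 1 one_pos
  set G : ℝ → ℝ := fun s => max (F s) 0 with hGdef
  have hGc : Continuous G := hF.max continuous_const
  have hG0 : ∀ s, 0 ≤ G s := fun s => le_max_right _ _
  -- bound on compact set
  obtain ⟨β, hβ⟩ := (isCompact_Icc (a := -r₂) (b := r₂)).exists_bound_of_continuousOn
    hGc.continuousOn
  have hr₂ : 0 < r₂ := lt_trans hr₁ hr₁₂
  have hβ0 : 0 ≤ β := le_trans (norm_nonneg _) (hβ 0 ⟨by linarith, hr₂.le⟩)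
  -- pointwise growth bound
  have hbd : ∀ s : ℝ, G s ≤ |s| ^ q + Set.indicator {s : ℝ | r₁ ≤ |s|} (fun _ => β) s := by
    intro s
    have hind : 0 ≤ Set.indicator {s : ℝ | r₁ ≤ |s|} (fun _ => β) s :=
      Set.indicator_nonneg (fun _ _ => hβ0) s
    by_cases h1 : |s| ≤ r₁
    · have := hgr s (Or.inl h1)
      rw [one_mul] at this
      linarith
    by_cases h2 : r₂ ≤ |s|
    · have := hgr s (Or.inr h2)
      rw [one_mul] at this
      linarith
    · push_neg at h1 h2
      have hmem : s ∈ Set.Icc (-r₂) r₂ := by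
        constructor <;> [linarith [neg_abs_le s]; linarith [le_abs_self s]]
      have h3 : G s ≤ β := le_trans (le_abs_self _) (hβ s hmem)
      have h4 : s ∈ {s : ℝ | r₁ ≤ |s|} := h1.le
      rw [Set.indicator_of_mem h4]
      have : 0 ≤ |s| ^ q := Real.rpow_nonneg (abs_nonneg _) q
      linarith
  -- measurability of u
  have hu : AEMeasurable u (volume : Measure (EuclideanSpace ℝ (Fin n))) :=
    aemeasurable_of_tendsto_metrizable_ae Filter.atTop hm hae
  -- eLpNorm bound transfers to u
  have hqe0 : ENNReal.ofReal q ≠ 0 := (ENNReal.ofReal_pos.mpr hq).ne'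
  have hqet : ENNReal.ofReal q ≠ ∞ := ENNReal.ofReal_ne_top
  have hubdd : eLpNorm u (ENNReal.ofReal q) volume ≤ C := by
    refine le_trans (Lp.eLpNorm_lim_le_liminf_eLpNorm
      (fun h => (hm h).aestronglyMeasurable) u hae) ?_
    refine le_trans (Filter.liminf_le_liminf (Filter.Eventually.of_forall hbdd)) ?_
    simp [Filter.liminf_const]
  -- lintegral bound from eLpNorm bound
  have hIle : ∀ v : EuclideanSpace ℝ (Fin n) → ℝ, AEMeasurable v volume →
      eLpNorm v (ENNReal.ofReal q) volume ≤ C →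
      ∫⁻ x, (‖v x‖₊ : ℝ≥0∞) ^ q ∂volume ≤ C ^ q := by
    intro v hv hvC
    rw [eLpNorm_eq_lintegral_rpow_enorm_toReal hqe0 hqet, ENNReal.toReal_ofReal hq.le] at hvC
    calc ∫⁻ x, (‖v x‖₊ : ℝ≥0∞) ^ q ∂volume
        = ((∫⁻ x, (‖v x‖₊ : ℝ≥0∞) ^ q ∂volume) ^ (1 / q)) ^ q := by
          rw [← ENNReal.rpow_mul, one_div, inv_mul_cancel₀ hq.ne', ENNReal.rpow_one]
      _ ≤ C ^ q := ENNReal.rpow_le_rpow hvC hq.le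
  -- the uniform bound M
  set M : ℝ≥0∞ := (1 + ENNReal.ofReal β / ENNReal.ofReal r₁ ^ q) * C ^ q with hMdef
  have hMlt : M < ∞ := by
    apply ENNReal.mul_lt_top
    · refine ENNReal.add_lt_top.mpr ⟨ENNReal.one_lt_top, ENNReal.div_lt_top ENNReal.ofReal_ne_top ?_⟩
      rw [ENNReal.ofReal_rpow_of_nonneg hr₁.le hq.le]
      simpa using (Real.rpow_pos_of_pos hr₁ q)
    · exact ENNReal.rpow_lt_top_of_nonneg hq.le hC.ne
  have keyL : ∀ v : EuclideanSpace ℝ (Fin n) → ℝ, AEMeasurable v volume →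
      eLpNorm v (ENNReal.ofReal q) volume ≤ C →
      ∫⁻ x, ENNReal.ofReal (G (v x)) ∂volume ≤ M := by
    intro v hv hvC
    refine le_trans (key_bound hq hr₁ hβ0 hbd hv) ?_
    exact mul_le_mul_right (hIle v hv hvC) _
  -- integrability of G ∘ v
  have intG : ∀ v : EuclideanSpace ℝ (Fin n) → ℝ, AEMeasurable v volume →
      eLpNorm v (ENNReal.ofReal q) volume ≤ C →
      Integrable (fun x => G (v x)) volume := by
    intro v hv hvC
    refine ⟨(hGc.measurable.comp_aemeasurable hv).aestronglyMeasurable, ?_⟩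
    rw [hasFiniteIntegral_iff_ofReal (Filter.Eventually.of_forall fun x => hG0 (v x))]
    exact lt_of_le_of_lt (keyL v hv hvC) hMlt
  have intGu : Integrable (fun x => G (u x)) volume := intG u hu hubdd
  have intGh : ∀ h, Integrable (fun x => G (uh h x)) volume :=
    fun h => intG (uh h) (hm h) (hbdd h)
  set H : ℝ → ℝ := fun s => max (-F s) 0 with hHdef
  have hHc : Continuous H := hF.neg.max continuous_const
  have hH0 : ∀ s, 0 ≤ H s := fun s => le_max_right _ _
  have hHG : ∀ s : ℝ, H s = G s - F s := fun s => max_neg_eq (F s)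
  have intHh : ∀ h, Integrable (fun x => H (uh h x)) volume := by
    intro h
    have := (intGh h).sub (hFL1 h)
    refine this.congr (Filter.Eventually.of_forall fun x => ?_)
    exact (hHG (uh h x)).symm
  have boundHh : ∀ h, ∫⁻ x, ENNReal.ofReal (H (uh h x)) ∂volume ≤ M := by
    intro h
    rw [← ofReal_integral_eq_lintegral_ofReal (intHh h)
      (Filter.Eventually.of_forall fun x => hH0 (uh h x))]
    have h1 : (∫ x, H (uh h x)) = (∫ x, G (uh h x)) - 1 := by
      have heq : (fun x => H (uh h x)) = fun x => G (uh h x) - F (uh h x) := by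
        funext x; exact hHG (uh h x)
      rw [heq, integral_sub (intGh h) (hFL1 h), hint1 h]
    have h2 : (∫ x, H (uh h x)) ≤ ∫ x, G (uh h x) := by rw [h1]; linarith
    calc ENNReal.ofReal (∫ x, H (uh h x))
        ≤ ENNReal.ofReal (∫ x, G (uh h x)) := ENNReal.ofReal_le_ofReal h2
      _ = ∫⁻ x, ENNReal.ofReal (G (uh h x)) ∂volume :=
          ofReal_integral_eq_lintegral_ofReal (intGh h)
            (Filter.Eventually.of_forall fun x => hG0 (uh h x))
      _ ≤ M := keyL (uh h) (hm h) (hbdd h)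
  -- Fatou
  have hcont : Continuous fun a : ℝ => ENNReal.ofReal (H a) :=
    ENNReal.continuous_ofReal.comp hHc
  have hptw : ∀ᵐ x ∂(volume : Measure (EuclideanSpace ℝ (Fin n))),
      Filter.Tendsto (fun h => ENNReal.ofReal (H (uh h x))) Filter.atTop
        (nhds (ENNReal.ofReal (H (u x)))) :=
    hae.mono fun x hx => (hcont.tendsto _).comp hx
  have hmeash : ∀ h, AEMeasurable (fun x => ENNReal.ofReal (H (uh h x))) volume :=
    fun h => hcont.measurable.comp_aemeasurable (hm h)
  have fatou : ∫⁻ x, ENNReal.ofReal (H (u x)) ∂volume ≤ M := by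
    calc ∫⁻ x, ENNReal.ofReal (H (u x)) ∂volume
        = ∫⁻ x, Filter.liminf (fun h => ENNReal.ofReal (H (uh h x))) Filter.atTop ∂volume :=
          lintegral_congr_ae (hptw.mono fun x hx => hx.liminf_eq.symm)
      _ ≤ Filter.liminf (fun h => ∫⁻ x, ENNReal.ofReal (H (uh h x)) ∂volume) Filter.atTop :=
          lintegral_liminf_le' hmeash
      _ ≤ M := by
          refine le_trans (Filter.liminf_le_liminf (Filter.Eventually.of_forall boundHh)) ?_
          simp [Filter.liminf_const]
  have intHu : Integrable (fun x => H (u x)) volume := by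
    refine ⟨(hHc.measurable.comp_aemeasurable hu).aestronglyMeasurable, ?_⟩
    rw [hasFiniteIntegral_iff_ofReal (Filter.Eventually.of_forall fun x => hH0 (u x))]
    exact lt_of_le_of_lt fatou hMlt
  have intFu : Integrable (fun x => F (u x)) volume := by
    have := intGu.sub intHu
    refine this.congr (Filter.Eventually.of_forall fun x => ?_)
    have := hHG (u x)
    simp only [hHdef, hGdef, Pi.sub_apply] at this ⊢
    linarith
  exact ⟨intGu, intHu, intFu⟩
end

section
/- Let Λ : [0,∞) → [0,∞) be C¹ with Λ(t) = λ for t ≤ 1, Λ(t) = 1 for t ≥ r, ρ := inf Λ > 1/2, and sup|Λ'| < ρ/r. Define Π : ℝⁿ → ℝⁿ by Π(x) = Λ(|x|)x. Then |Π(x)| ≥ ρ|x| for all x ∈ ℝⁿ, and Π is a bijection of ℝⁿ onto itself. -/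
theorem stmt_9 {n : ℕ} (hn : 0 < n) (lam r ρ : ℝ) (hlam : 0 < lam) (hr : 1 < r)
    (Λ : ℝ → ℝ) (hC1 : ContDiff ℝ 1 Λ)
    (h1 : ∀ t : ℝ, 0 ≤ t → t ≤ 1 → Λ t = lam)
    (h2 : ∀ t : ℝ, r ≤ t → Λ t = 1)
    (hρ : ∀ t : ℝ, 0 ≤ t → ρ ≤ Λ t) (hρhalf : 1 / 2 < ρ)
    (hd : ∀ t : ℝ, 0 ≤ t → |deriv Λ t| < ρ / r) :
    (∀ x : EuclideanSpace ℝ (Fin n), ρ * ‖x‖ ≤ ‖Λ ‖x‖ • x‖) ∧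
    Function.Bijective (fun x : EuclideanSpace ℝ (Fin n) => Λ ‖x‖ • x) := by
  have hρ0 : (0:ℝ) < ρ := lt_trans (by norm_num) hρhalf
  have hr0 : (0:ℝ) < r := lt_trans one_pos hr
  have hΛpos : ∀ t : ℝ, 0 ≤ t → 0 < Λ t := fun t ht => lt_of_lt_of_le hρ0 (hρ t ht)
  have hΛdiff : Differentiable ℝ Λ := hC1.differentiable one_ne_zero
  set f : ℝ → ℝ := fun t => t * Λ t with hf
  have hfdiff : Differentiable ℝ f := differentiable_id.mul hΛdiff
  have hfderiv : ∀ t, deriv f t = Λ t + t * deriv Λ t := by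
    intro t
    rw [hf]
    rw [deriv_fun_mul differentiableAt_fun_id (hΛdiff t), deriv_id'']
    ring
  have hρ1 : ρ ≤ 1 := by
    have := hρ r hr0.le
    rwa [h2 r le_rfl] at this
  have hderivpos : ∀ t ∈ interior (Set.Ici (0:ℝ)), 0 < deriv f t := by
    rw [interior_Ici]
    intro t ht
    have ht0 : (0:ℝ) < t := ht
    rcases le_or_gt t r with hle | hgt
    · have habs : |deriv Λ t| < ρ / r := hd t ht0.le
      have h1' : -(ρ / r) < deriv Λ t := (abs_lt.mp habs).1
      have h2' : -(t * (ρ / r)) < t * deriv Λ t := by nlinarith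
      have hΛt := hρ t ht0.le
      have hge : t * (ρ / r) ≤ ρ := by
        have h3 : t * (ρ / r) ≤ r * (ρ / r) :=
          mul_le_mul_of_nonneg_right hle (le_of_lt (div_pos hρ0 hr0))
        have h4 : r * (ρ / r) = ρ := by field_simp
        linarith
      rw [hfderiv]; linarith
    · have hΛ1 : Λ t = 1 := h2 t hgt.le
      have hd0 : deriv Λ t = 0 := by
        have heq : Set.EqOn Λ (fun _ => (1:ℝ)) (Set.Ioi r) := fun s hs => h2 s (le_of_lt hs)
        have hev : Λ =ᶠ[nhds t] fun _ => (1:ℝ) :=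
          Filter.eventuallyEq_of_mem (isOpen_Ioi.mem_nhds hgt) heq
        rw [hev.deriv_eq, deriv_const]
      rw [hfderiv, hΛ1, hd0]; norm_num
  have hmono : StrictMonoOn f (Set.Ici 0) :=
    strictMonoOn_of_deriv_pos (convex_Ici 0) hfdiff.continuous.continuousOn hderivpos
  have hnormeq : ∀ x : EuclideanSpace ℝ (Fin n), ‖Λ ‖x‖ • x‖ = f ‖x‖ := by
    intro x
    rw [norm_smul, Real.norm_eq_abs, abs_of_pos (hΛpos _ (norm_nonneg x)), mul_comm]
  refine ⟨?_, ?_, ?_⟩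
  · intro x
    rw [norm_smul, Real.norm_eq_abs, abs_of_pos (hΛpos _ (norm_nonneg x))]
    exact mul_le_mul_of_nonneg_right (hρ _ (norm_nonneg x)) (norm_nonneg x)
  · intro x y hxy
    simp only at hxy
    have hfeq : f ‖x‖ = f ‖y‖ := by
      rw [← hnormeq x, ← hnormeq y, hxy]
    have hxyn : ‖x‖ = ‖y‖ := hmono.injOn (norm_nonneg x) (norm_nonneg y) hfeq
    rw [hxyn] at hxy
    exact smul_right_injective _ (ne_of_gt (hΛpos _ (norm_nonneg y))) hxy
  · intro y
    by_cases hy : y = 0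
    · exact ⟨0, by simp [hy]⟩
    · have hc : 0 < ‖y‖ := norm_pos_iff.mpr hy
      set c := ‖y‖ with hcdef
      have h0T : (0:ℝ) ≤ max r c := le_trans hr0.le (le_max_left r c)
      have hT : f (max r c) = max r c := by
        show max r c * Λ (max r c) = max r c
        rw [h2 _ (le_max_left r c), mul_one]
      have hcT : c ∈ Set.Icc (f 0) (f (max r c)) := by
        constructor
        · show (0:ℝ) * Λ 0 ≤ c
          rw [zero_mul]; exact hc.le
        · rw [hT]; exact le_max_right r c
      obtain ⟨s, hs, hfs⟩ := intermediate_value_Icc h0T hfdiff.continuous.continuousOn hcT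
      have hs0 : 0 ≤ s := hs.1
      refine ⟨(s / c) • y, ?_⟩
      have hn : ‖(s / c) • y‖ = s := by
        rw [norm_smul, Real.norm_eq_abs, abs_of_nonneg (div_nonneg hs0 hc.le), ← hcdef]
        field_simp
      simp only
      rw [hn, smul_smul]
      have hmul : Λ s * (s / c) = (s * Λ s) / c := by ring
      have hfs' : s * Λ s = c := hfs
      rw [hmul, hfs', div_self (ne_of_gt hc), one_smul]
end
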